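/- Let A be a symmetric positive semidefinite n×n real matrix, F̂ : ℝ → ℝ with F̂ = 𝔣̂² for 𝔣̂ ≥ 0. Set W(t) = cos(t√A)·F̂(√A)·e_s and u(t) = cos(t√A)·𝔣̂(√A)·e_s. If 𝔣 : ℝ → ℝ is even and satisfies ∫ 𝔣(t') cos(t'ω) dt' = 𝔣̂(ω) for all ω ≥ 0 (with suitable integrability), then W(t) = ∫ℝ 𝔣(t−t')·u(t') dt' for all t, i.e., W = 𝔣 ⋆ u componentwise. -/

import Mathlib

open Matrix
open MeasureTheory

/-- `f(A)` for a real symmetric matrix `A`, via the spectral decomposition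
`A = Q diag(θⱼ) Qᵀ`, `f(A) = Q diag(f(θⱼ)) Qᵀ`. -/
noncomputable def matFun {n : Type*} [Fintype n] [DecidableEq n] (A : Matrix n n ℝ)
    (hA : A.IsHermitian) (f : ℝ → ℝ) : Matrix n n ℝ :=
  (hA.eigenvectorUnitary : Matrix n n ℝ) * Matrix.diagonal (fun i => f (hA.eigenvalues i)) *
    star (hA.eigenvectorUnitary : Matrix n n ℝ)

/-- `cos(t·√A)` for a real symmetric (positive semidefinite) matrix `A`. -/
noncomputable def matCos {n : Type*} [Fintype n] [DecidableEq n] (A : Matrix n n ℝ)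
    (hA : A.IsHermitian) (t : ℝ) : Matrix n n ℝ :=
  matFun A hA (fun θ => Real.cos (t * Real.sqrt θ))

/-- Multiplicativity of the functional calculus. -/
lemma matFun_mul {n : Type*} [Fintype n] [DecidableEq n] (A : Matrix n n ℝ)
    (hA : A.IsHermitian) (f g : ℝ → ℝ) :
    matFun A hA f * matFun A hA g = matFun A hA (fun θ => f θ * g θ) := by
  have h1 : star (hA.eigenvectorUnitary : Matrix n n ℝ) *
      (hA.eigenvectorUnitary : Matrix n n ℝ) = 1 :=
    Unitary.star_mul_self_of_mem hA.eigenvectorUnitary.prop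
  unfold matFun
  simp only [Matrix.mul_assoc]
  rw [← Matrix.mul_assoc (star (hA.eigenvectorUnitary : Matrix n n ℝ)), h1, Matrix.one_mul,
    ← Matrix.mul_assoc (Matrix.diagonal _), Matrix.diagonal_mul_diagonal]

/-- Entry formula for `f(A) eₛ`. -/
lemma matFun_mulVec_single {n : Type*} [Fintype n] [DecidableEq n] (A : Matrix n n ℝ)
    (hA : A.IsHermitian) (f : ℝ → ℝ) (s i : n) :
    (matFun A hA f).mulVec (Pi.single s 1) i =
      ∑ j, (hA.eigenvectorUnitary : Matrix n n ℝ) i j * f (hA.eigenvalues j) *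
        (hA.eigenvectorUnitary : Matrix n n ℝ) s j := by
  rw [Matrix.mulVec_single]
  show ((matFun A hA f) i s) * 1 = _
  rw [mul_one]
  unfold matFun
  rw [Matrix.mul_apply]
  simp [Matrix.mul_diagonal, Matrix.star_apply]

/-- The scalar convolution identity: `(𝔣 ⋆ cos(·ω))(t) = 𝔣̂(ω) cos(tω)`. -/
lemma scalar_conv (𝔣 fh : ℝ → ℝ) (h𝔣even : ∀ t, 𝔣 (-t) = 𝔣 t) (h𝔣int : Integrable 𝔣)
    (h𝔣hat : ∀ ω : ℝ, 0 ≤ ω → (∫ t', 𝔣 t' * Real.cos (t' * ω)) = fh ω)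
    (ω : ℝ) (hω : 0 ≤ ω) (t : ℝ) :
    (∫ t', 𝔣 (t - t') * Real.cos (t' * ω)) = fh ω * Real.cos (t * ω) := by
  have hmc : AEStronglyMeasurable (fun s : ℝ => Real.cos (s * ω)) volume :=
    (Real.continuous_cos.comp (continuous_id.mul continuous_const)).aestronglyMeasurable
  have hms : AEStronglyMeasurable (fun s : ℝ => Real.sin (s * ω)) volume :=
    (Real.continuous_sin.comp (continuous_id.mul continuous_const)).aestronglyMeasurable
  have hic : Integrable (fun s => 𝔣 s * Real.cos (s * ω)) := by
    have := h𝔣int.bdd_mul hmc (c := 1) (Filter.Eventually.of_forall fun x => by simpa using Real.abs_cos_le_one _)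
    simpa [mul_comm] using this
  have his : Integrable (fun s => 𝔣 s * Real.sin (s * ω)) := by
    have := h𝔣int.bdd_mul hms (c := 1) (Filter.Eventually.of_forall fun x => by simpa using Real.abs_sin_le_one _)
    simpa [mul_comm] using this
  -- change of variables
  have step1 : (∫ t', 𝔣 (t - t') * Real.cos (t' * ω)) =
      ∫ s, 𝔣 s * Real.cos ((t - s) * ω) := by
    rw [← integral_sub_left_eq_self (fun s => 𝔣 s * Real.cos ((t - s) * ω)) volume t]
    congr 1; funext t'; simp
  -- odd part vanishes
  have hodd : (∫ s, 𝔣 s * Real.sin (s * ω)) = 0 := by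
    have h1 : (∫ s, 𝔣 (-s) * Real.sin ((-s) * ω)) = ∫ s, 𝔣 s * Real.sin (s * ω) :=
      integral_neg_eq_self (fun s => 𝔣 s * Real.sin (s * ω)) volume
    have h2 : (∫ s, 𝔣 (-s) * Real.sin ((-s) * ω)) = - ∫ s, 𝔣 s * Real.sin (s * ω) := by
      rw [← integral_neg]
      congr 1; funext s
      rw [h𝔣even]; simp [neg_mul, Real.sin_neg]
    have := h1.symm.trans h2
    linarith
  rw [step1]
  have expand : (fun s => 𝔣 s * Real.cos ((t - s) * ω)) =
      fun s => Real.cos (t * ω) * (𝔣 s * Real.cos (s * ω)) +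
        Real.sin (t * ω) * (𝔣 s * Real.sin (s * ω)) := by
    funext s
    rw [sub_mul, Real.cos_sub]
    ring
  rw [expand, integral_add (hic.const_mul _) (his.const_mul _), integral_const_mul,
    integral_const_mul, hodd, h𝔣hat ω hω]
  ring

/-- Finite-dimensional version of eq. (3.1): with `W(t) = cos(t√A)·F̂(√A)·e_s`,
`u(t) = cos(t√A)·𝔣̂(√A)·e_s`, `F̂ = 𝔣̂²`, `𝔣̂ ≥ 0`, and `𝔣` an even integrable pulse with
`∫ 𝔣(t') cos(t'ω) dt' = 𝔣̂(ω)` for `ω ≥ 0`, one has `W = 𝔣 ⋆ u` componentwise. -/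
theorem internal_wave_convolution {n : Type*} [Fintype n] [DecidableEq n]
    (A : Matrix n n ℝ) (hA : A.IsHermitian) (hpsd : A.PosSemidef)
    (Fhat fh : ℝ → ℝ) (hfh : ∀ ω, 0 ≤ fh ω) (hF : ∀ ω, Fhat ω = fh ω ^ 2)
    (s : n)
    (W u : ℝ → (n → ℝ))
    (hW : ∀ t, W t = (matCos A hA t).mulVec
      ((matFun A hA fun θ => Fhat (Real.sqrt θ)).mulVec (Pi.single s 1)))
    (hu : ∀ t, u t = (matCos A hA t).mulVec
      ((matFun A hA fun θ => fh (Real.sqrt θ)).mulVec (Pi.single s 1)))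
    (𝔣 : ℝ → ℝ) (h𝔣even : ∀ t, 𝔣 (-t) = 𝔣 t) (h𝔣int : Integrable 𝔣)
    (h𝔣hat : ∀ ω : ℝ, 0 ≤ ω → (∫ t', 𝔣 t' * Real.cos (t' * ω)) = fh ω) :
    ∀ (t : ℝ) (i : n), W t i = ∫ t', 𝔣 (t - t') * u t' i := by
  intro t i
  set Q : Matrix n n ℝ := (hA.eigenvectorUnitary : Matrix n n ℝ) with hQ
  set θ : n → ℝ := hA.eigenvalues with hθ
  -- entry formulas
  have hWi : W t i = ∑ j, Q i j * (Real.cos (t * Real.sqrt (θ j)) * Fhat (Real.sqrt (θ j)))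
      * Q s j := by
    rw [hW, Matrix.mulVec_mulVec, matCos, matFun_mul]
    exact matFun_mulVec_single A hA _ s i
  have hui : ∀ t' : ℝ, u t' i = ∑ j, Q i j *
      (Real.cos (t' * Real.sqrt (θ j)) * fh (Real.sqrt (θ j))) * Q s j := by
    intro t'
    rw [hu, Matrix.mulVec_mulVec, matCos, matFun_mul]
    exact matFun_mulVec_single A hA _ s i
  -- integrability of each summand
  have hint : ∀ ω : ℝ, Integrable (fun t' => 𝔣 (t - t') * Real.cos (t' * ω)) := by
    intro ω
    have hf' : Integrable (fun t' : ℝ => 𝔣 (t - t')) := h𝔣int.comp_sub_left t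
    have hmc : AEStronglyMeasurable (fun s : ℝ => Real.cos (s * ω)) volume :=
      (Real.continuous_cos.comp (continuous_id.mul continuous_const)).aestronglyMeasurable
    have := hf'.bdd_mul hmc (c := 1) (Filter.Eventually.of_forall fun x => by simpa using Real.abs_cos_le_one _)
    simpa [mul_comm] using this
  have hintj : ∀ j : n, Integrable (fun t' => 𝔣 (t - t') *
      (Q i j * (Real.cos (t' * Real.sqrt (θ j)) * fh (Real.sqrt (θ j))) * Q s j)) := by
    intro j
    have := ((hint (Real.sqrt (θ j))).const_mul (Q i j * fh (Real.sqrt (θ j)) * Q s j))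
    refine this.congr ?_
    filter_upwards with t'; ring
  calc W t i = ∑ j, Q i j * (Real.cos (t * Real.sqrt (θ j)) * Fhat (Real.sqrt (θ j)))
      * Q s j := hWi
    _ = ∑ j, ∫ t', 𝔣 (t - t') *
        (Q i j * (Real.cos (t' * Real.sqrt (θ j)) * fh (Real.sqrt (θ j))) * Q s j) := by
      refine Finset.sum_congr rfl fun j _ => ?_
      have hconv := scalar_conv 𝔣 fh h𝔣even h𝔣int h𝔣hat (Real.sqrt (θ j))
        (Real.sqrt_nonneg _) t
      have : (∫ t', 𝔣 (t - t') *
          (Q i j * (Real.cos (t' * Real.sqrt (θ j)) * fh (Real.sqrt (θ j))) * Q s j)) =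
          (Q i j * fh (Real.sqrt (θ j)) * Q s j) *
            ∫ t', 𝔣 (t - t') * Real.cos (t' * Real.sqrt (θ j)) := by
        rw [← integral_const_mul]
        congr 1; funext t'; ring
      rw [this, hconv, hF]
      ring
    _ = ∫ t', ∑ j, 𝔣 (t - t') *
        (Q i j * (Real.cos (t' * Real.sqrt (θ j)) * fh (Real.sqrt (θ j))) * Q s j) :=
      (integral_finset_sum _ fun j _ => hintj j).symm
    _ = ∫ t', 𝔣 (t - t') * u t' i := by
      congr 1; funext t'
      rw [hui t', Finset.mul_sum]
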